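/- Fix ℓ > 0. The function r : ℝ → ℝ defined by r(v) = (1/2)v₋² − S_ℓ(v₋) (explicitly, r(v) = 0 for v ≥ −ℓ, r(v) = −(v+ℓ)³/(6ℓ) for −2ℓ < v < −ℓ, and r(v) = (3v² + 9ℓv + 7ℓ²)/6 for v ≤ −2ℓ) is nonnegative and convex on ℝ. -/

import Mathlib

open Real

/-- The renormalisation entropy `S_ℓ`: `S_ℓ(v) = v²/2` for `|v| ≤ ℓ`;
`S_ℓ(v) = −|v|³/(6ℓ) + v² − (ℓ/2)|v| + ℓ²/6` for `ℓ < |v| < 2ℓ`;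
`S_ℓ(v) = (3ℓ/2)|v| − (7/6)ℓ²` for `|v| ≥ 2ℓ`. -/
noncomputable def Sl (ℓ v : ℝ) : ℝ :=
  if |v| ≤ ℓ then v ^ 2 / 2
  else if |v| < 2 * ℓ then -|v| ^ 3 / (6 * ℓ) + v ^ 2 - (ℓ / 2) * |v| + ℓ ^ 2 / 6
  else (3 * ℓ / 2) * |v| - (7 / 6) * ℓ ^ 2

/-- The derivative of `S_ℓ`: `S_ℓ'(v) = v` for `|v| ≤ ℓ`;
`S_ℓ'(v) = sgn(v)(2|v| − v²/(2ℓ) − ℓ/2)` for `ℓ < |v| < 2ℓ`;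
`S_ℓ'(v) = (3ℓ/2)sgn(v)` for `|v| ≥ 2ℓ`. -/
noncomputable def Sl' (ℓ v : ℝ) : ℝ :=
  if |v| ≤ ℓ then v
  else if |v| < 2 * ℓ then Real.sign v * (2 * |v| - v ^ 2 / (2 * ℓ) - ℓ / 2)
  else (3 * ℓ / 2) * Real.sign v

noncomputable def rfun (ℓ v : ℝ) : ℝ := (1 / 2) * (min v 0) ^ 2 - Sl ℓ (min v 0)

lemma rA (ℓ : ℝ) (hℓ : 0 < ℓ) {v : ℝ} (hv : -ℓ ≤ v) : rfun ℓ v = 0 := by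
  rcases le_or_gt 0 v with h | h
  · simp [rfun, min_eq_right h, Sl, abs_of_nonneg (le_refl (0:ℝ)), hℓ.le]
  · have hm : min v 0 = v := min_eq_left h.le
    have habs : |v| = -v := abs_of_neg h
    simp only [rfun, hm, Sl, habs]
    rw [if_pos (by linarith)]
    ring

lemma rB (ℓ : ℝ) (hℓ : 0 < ℓ) {v : ℝ} (h1 : -(2*ℓ) ≤ v) (h2 : v ≤ -ℓ) :
    rfun ℓ v = -((v + ℓ) ^ 3) / (6 * ℓ) := by
  rcases eq_or_lt_of_le h2 with rfl | h2'
  · rw [rA ℓ hℓ le_rfl]; ring_nf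
  have hv0 : v < 0 := by linarith
  have hm : min v 0 = v := min_eq_left hv0.le
  have habs : |v| = -v := abs_of_neg hv0
  simp only [rfun, hm, Sl, habs]
  rw [if_neg (by linarith)]
  rcases eq_or_lt_of_le h1 with rfl | h1'
  · rw [if_neg (by push_neg; linarith)]
    field_simp
    ring
  · rw [if_pos (by linarith)]
    field_simp
    ring

lemma rC (ℓ : ℝ) (hℓ : 0 < ℓ) {v : ℝ} (hv : v ≤ -(2*ℓ)) :
    rfun ℓ v = (3 * v ^ 2 + 9 * ℓ * v + 7 * ℓ ^ 2) / 6 := by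
  have hv0 : v < 0 := by linarith
  have hm : min v 0 = v := min_eq_left hv0.le
  have habs : |v| = -v := abs_of_neg hv0
  simp only [rfun, hm, Sl, habs]
  rw [if_neg (by linarith), if_neg (by push_neg; linarith)]
  ring

noncomputable def rder (ℓ v : ℝ) : ℝ :=
  if -ℓ ≤ v then 0 else if -(2*ℓ) ≤ v then -((v + ℓ) ^ 2) / (2 * ℓ) else v + 3 * ℓ / 2

lemma cubicDeriv (ℓ : ℝ) (hℓ : 0 < ℓ) (x : ℝ) :
    HasDerivAt (fun v => -((v + ℓ) ^ 3) / (6 * ℓ)) (-((x + ℓ) ^ 2) / (2 * ℓ)) x := by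
  have h := (((hasDerivAt_id x).add_const ℓ).pow 3).neg.div_const (6 * ℓ)
  refine h.congr_deriv ?_
  field_simp
  simp only [id]
  ring

lemma quadDeriv (ℓ x : ℝ) :
    HasDerivAt (fun v => (3 * v ^ 2 + 9 * ℓ * v + 7 * ℓ ^ 2) / 6) (x + 3 * ℓ / 2) x := by
  have h1 : HasDerivAt (fun v : ℝ => 3 * v ^ 2 + 9 * ℓ * v + 7 * ℓ ^ 2)
      (3 * (2 * x ^ 1) + 9 * ℓ * 1) x :=
    (((hasDerivAt_pow 2 x).const_mul 3).add ((hasDerivAt_id' x).const_mul (9 * ℓ))).add_const _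
  refine (h1.div_const 6).congr_deriv ?_
  ring

lemma rderiv (ℓ : ℝ) (hℓ : 0 < ℓ) (x : ℝ) : HasDerivAt (rfun ℓ) (rder ℓ x) x := by
  rcases lt_trichotomy x (-(2*ℓ)) with h | h | h
  · have hr : rder ℓ x = x + 3 * ℓ / 2 := by
      rw [rder, if_neg (by linarith), if_neg (by linarith)]
    rw [hr]
    refine (quadDeriv ℓ x).congr_of_eventuallyEq ?_
    filter_upwards [Iio_mem_nhds h] with y hy
    exact rC ℓ hℓ (le_of_lt hy)
  · -- x = -(2ℓ)
    subst h
    have hval : rder ℓ (-(2*ℓ)) = -ℓ/2 := by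
      rw [rder, if_neg (by linarith), if_pos le_rfl]
      field_simp; ring
    rw [hval]
    have hquad : HasDerivWithinAt (rfun ℓ) (-ℓ/2) (Set.Iic (-(2*ℓ))) (-(2*ℓ)) := by
      have h := (quadDeriv ℓ (-(2*ℓ))).hasDerivWithinAt (s := Set.Iic (-(2*ℓ)))
      have h' : (-(2*ℓ)) + 3 * ℓ / 2 = -ℓ/2 := by ring
      rw [h'] at h
      exact h.congr (fun y hy => rC ℓ hℓ hy) (rC ℓ hℓ le_rfl)
    have hcubic : HasDerivWithinAt (rfun ℓ) (-ℓ/2) (Set.Icc (-(2*ℓ)) (-ℓ)) (-(2*ℓ)) := by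
      have h := (cubicDeriv ℓ hℓ (-(2*ℓ))).hasDerivWithinAt (s := Set.Icc (-(2*ℓ)) (-ℓ))
      have h' : -((-(2*ℓ) + ℓ) ^ 2) / (2 * ℓ) = -ℓ/2 := by
        field_simp; ring
      rw [h'] at h
      exact h.congr (fun y hy => rB ℓ hℓ hy.1 hy.2)
        (rB ℓ hℓ le_rfl (by linarith))
    have hunion := hquad.union hcubic
    rw [Set.Iic_union_Icc_eq_Iic (by linarith)] at hunion
    exact hunion.hasDerivAt (Iic_mem_nhds (by linarith))
  · rcases lt_trichotomy x (-ℓ) with h2 | h2 | h2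
    · have hr : rder ℓ x = -((x + ℓ) ^ 2) / (2 * ℓ) := by
        rw [rder, if_neg (by linarith), if_pos (by linarith)]
      rw [hr]
      refine (cubicDeriv ℓ hℓ x).congr_of_eventuallyEq ?_
      filter_upwards [Ioo_mem_nhds h h2] with y hy
      exact rB ℓ hℓ hy.1.le hy.2.le
    · subst h2
      have hval : rder ℓ (-ℓ) = 0 := by rw [rder, if_pos le_rfl]
      rw [hval]
      have hcubic : HasDerivWithinAt (rfun ℓ) 0 (Set.Icc (-(2*ℓ)) (-ℓ)) (-ℓ) := by
        have hh := (cubicDeriv ℓ hℓ (-ℓ)).hasDerivWithinAt (s := Set.Icc (-(2*ℓ)) (-ℓ))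
        have h' : -((-ℓ + ℓ) ^ 2) / (2 * ℓ) = 0 := by
          field_simp
          norm_num
        rw [h'] at hh
        exact hh.congr (fun y hy => rB ℓ hℓ hy.1 hy.2) (rB ℓ hℓ (by linarith) le_rfl)
      have hzero : HasDerivWithinAt (rfun ℓ) 0 (Set.Ici (-ℓ)) (-ℓ) := by
        have hh := (hasDerivAt_const (-ℓ) (0:ℝ)).hasDerivWithinAt (s := Set.Ici (-ℓ))
        exact hh.congr (fun y hy => rA ℓ hℓ hy) (rA ℓ hℓ le_rfl)
      have hunion := hcubic.union hzero
      rw [Set.Icc_union_Ici_eq_Ici (by linarith)] at hunion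
      exact hunion.hasDerivAt (Ici_mem_nhds (by linarith))
    · have hr : rder ℓ x = 0 := by rw [rder, if_pos (by linarith)]
      rw [hr]
      refine (hasDerivAt_const x (0:ℝ)).congr_of_eventuallyEq ?_
      filter_upwards [Ioi_mem_nhds h2] with y hy
      exact rA ℓ hℓ hy.le

lemma rder_mono (ℓ : ℝ) (hℓ : 0 < ℓ) : Monotone (rder ℓ) := by
  intro a b hab
  have h2ℓ : (0:ℝ) < 2 * ℓ := by linarith
  rcases le_or_gt (-ℓ) a with ha | ha
  · simp only [rder]; rw [if_pos ha, if_pos (le_trans ha hab)]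
  · rcases le_or_gt (-ℓ) b with hb | hb
    · simp only [rder]
      rw [if_neg (not_le.2 ha), if_pos hb]
      rcases le_or_gt (-(2*ℓ)) a with ha2 | ha2
      · rw [if_pos ha2, div_le_iff₀ h2ℓ]
        nlinarith [sq_nonneg (a + ℓ)]
      · rw [if_neg (not_le.2 ha2)]; linarith
    · simp only [rder]; rw [if_neg (not_le.2 ha), if_neg (not_le.2 hb)]
      have hb2 : -(2*ℓ) ≤ b ∨ b < -(2*ℓ) := le_or_gt _ _
      rcases le_or_gt (-(2*ℓ)) a with ha2 | ha2
      · rw [if_pos ha2, if_pos (le_trans ha2 hab), div_le_div_iff_of_pos_right h2ℓ]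
        nlinarith
      · rw [if_neg (not_le.2 ha2)]
        rcases le_or_gt (-(2*ℓ)) b with hb2 | hb2
        · rw [if_pos hb2, le_div_iff₀ h2ℓ]
          nlinarith [sq_nonneg (b + ℓ)]
        · rw [if_neg (not_le.2 hb2)]; linarith


/-- For `ℓ > 0`: `r(v) = (1/2)v₋² − S_ℓ(v₋)` (explicitly `0` for `v ≥ −ℓ`,
`−(v+ℓ)³/(6ℓ)` for `−2ℓ < v < −ℓ`, `(3v²+9ℓv+7ℓ²)/6` for `v ≤ −2ℓ`)
is nonnegative and convex on `ℝ`. -/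
theorem Sl_neg_part_defect_convex (ℓ : ℝ) (hℓ : 0 < ℓ) :
    (∀ v : ℝ, -ℓ ≤ v → (1 / 2) * (min v 0) ^ 2 - Sl ℓ (min v 0) = 0) ∧
    (∀ v : ℝ, -(2 * ℓ) < v → v < -ℓ →
      (1 / 2) * (min v 0) ^ 2 - Sl ℓ (min v 0) = -((v + ℓ) ^ 3) / (6 * ℓ)) ∧
    (∀ v : ℝ, v ≤ -(2 * ℓ) →
      (1 / 2) * (min v 0) ^ 2 - Sl ℓ (min v 0)
        = (3 * v ^ 2 + 9 * ℓ * v + 7 * ℓ ^ 2) / 6) ∧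
    (∀ v : ℝ, 0 ≤ (1 / 2) * (min v 0) ^ 2 - Sl ℓ (min v 0)) ∧
    ConvexOn ℝ Set.univ (fun v => (1 / 2) * (min v 0) ^ 2 - Sl ℓ (min v 0)) := by
  have hfun : ∀ v, (1 / 2) * (min v 0) ^ 2 - Sl ℓ (min v 0) = rfun ℓ v := fun v => rfl
  refine ⟨fun v hv => rA ℓ hℓ hv,
    fun v h1 h2 => rB ℓ hℓ h1.le h2.le,
    fun v hv => rC ℓ hℓ hv, ?_, ?_⟩
  · intro v
    rw [hfun]
    rcases le_or_gt (-ℓ) v with h | h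
    · rw [rA ℓ hℓ h]
    rcases le_or_gt (-(2*ℓ)) v with h2 | h2
    · rw [rB ℓ hℓ h2 h.le]
      have h3 : (v + ℓ) ^ 3 ≤ 0 := by nlinarith [sq_nonneg (v + ℓ)]
      exact div_nonneg (by linarith) (by linarith)
    · rw [rC ℓ hℓ h2.le]
      nlinarith [sq_nonneg (v + 3 * ℓ / 2)]
  · have hdiff : Differentiable ℝ (rfun ℓ) := fun x => (rderiv ℓ hℓ x).differentiableAt
    have hderiv : deriv (rfun ℓ) = rder ℓ := funext fun x => (rderiv ℓ hℓ x).deriv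
    have hmono : Monotone (deriv (rfun ℓ)) := by rw [hderiv]; exact rder_mono ℓ hℓ
    exact hmono.convexOn_univ_of_deriv hdiff
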